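/- Let 𝒜 : ℝⁿ → ℝⁿ be continuous with 𝒜(0) = 0, C¹ on ℝⁿ∖{0}, and suppose ⟨D𝒜(ξ)λ, λ⟩ ≥ ν·(g(|ξ|)/|ξ|)·|λ|² for every ξ ∈ ℝⁿ∖{0} and every λ ∈ ℝⁿ, where 0 < ν ≤ 1. Then there exists a constant c > 0 depending only on g₀, g₁, ν such that ⟨𝒜(ξ), ξ⟩ ≥ c·G(|ξ|) for every ξ ∈ ℝⁿ. -/

import Mathlib

open MeasureTheory intervalIntegral Set

/-- Coercivity of a vector field with `g`-ellipticity: if `⟨D𝒜(ξ)λ, λ⟩ ≥ ν g(|ξ|)/|ξ| |λ|²`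
off the origin and `𝒜(0) = 0`, then `⟨𝒜(ξ), ξ⟩ ≥ c G(|ξ|)` with `c = c(g₀, g₁, ν) > 0`. -/
theorem stmt_11 (g₀ g₁ ν : ℝ) (hg₀ : 1 < g₀) (hg₀₁ : g₀ ≤ g₁) (hν : 0 < ν) (hν1 : ν ≤ 1) :
    ∃ c : ℝ, 0 < c ∧
      ∀ (n : ℕ), 2 ≤ n →
      ∀ (g g' : ℝ → ℝ),
        (∀ s : ℝ, 0 < s → 0 < g s) →
        (∀ s : ℝ, 0 < s → HasDerivAt g (g' s) s) →
        ContinuousOn g' (Set.Ioi 0) →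
        (∀ s : ℝ, 0 < s → g₀ - 1 ≤ s * g' s / g s ∧ s * g' s / g s ≤ g₁ - 1) →
      ∀ (𝒜 : EuclideanSpace ℝ (Fin n) → EuclideanSpace ℝ (Fin n))
        (DA : EuclideanSpace ℝ (Fin n) →
          (EuclideanSpace ℝ (Fin n) →L[ℝ] EuclideanSpace ℝ (Fin n))),
        Continuous 𝒜 → 𝒜 0 = 0 →
        (∀ ξ, ξ ≠ 0 → HasFDerivAt 𝒜 (DA ξ) ξ) →
        ContinuousOn DA {(0 : EuclideanSpace ℝ (Fin n))}ᶜ →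
        (∀ ξ, ξ ≠ 0 → ∀ lam : EuclideanSpace ℝ (Fin n),
          ν * (g ‖ξ‖ / ‖ξ‖) * ‖lam‖ ^ 2 ≤ (inner ℝ (DA ξ lam) lam : ℝ)) →
        ∀ ξ : EuclideanSpace ℝ (Fin n),
          c * (∫ ρ in (0:ℝ)..‖ξ‖, g ρ) ≤ (inner ℝ (𝒜 ξ) ξ : ℝ) := by
  refine ⟨ν, hν, ?_⟩
  intro n hn g g' hgpos hgderiv hg'cont hgcond 𝒜 DA h𝒜c h𝒜0 hDA hDAc hell ξ
  rcases eq_or_ne ξ 0 with rfl | hξ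
  · simp [h𝒜0]
  have hr : (0:ℝ) < ‖ξ‖ := norm_pos_iff.mpr hξ
  set r := ‖ξ‖ with hrdef
  -- continuity of g on (0,∞)
  have hgc : ContinuousOn g (Set.Ioi 0) := fun s hs =>
    (hgderiv s hs).continuousAt.continuousWithinAt
  -- g' is positive on (0,∞)
  have hg'pos : ∀ s : ℝ, 0 < s → 0 < g' s := by
    intro s hs
    have h1 := (hgcond s hs).1
    have hg := hgpos s hs
    have h2 : 0 < s * g' s / g s := lt_of_lt_of_le (by linarith) h1
    rcases div_pos_iff.mp h2 with ⟨hp, _⟩ | ⟨_, hneg⟩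
    · nlinarith
    · linarith
  -- g is monotone on (0,∞)
  have hmono : MonotoneOn g (Set.Ioi 0) := by
    refine (strictMonoOn_of_deriv_pos (convex_Ioi 0) hgc ?_).monotoneOn
    intro x hx
    rw [interior_Ioi] at hx
    rw [(hgderiv x hx).deriv]
    exact hg'pos x hx
  -- integrability of g on (0, b]
  have hInt : ∀ b : ℝ, 0 < b → MeasureTheory.IntegrableOn g (Set.Ioc 0 b) := by
    intro b hb
    refine ⟨(hgc.mono Ioc_subset_Ioi_self).aestronglyMeasurable measurableSet_Ioc,
      MeasureTheory.HasFiniteIntegral.restrict_of_bounded (C := g b) measure_Ioc_lt_top ?_⟩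
    refine (MeasureTheory.ae_restrict_iff' measurableSet_Ioc).mpr ?_
    filter_upwards with x hx
    rw [Real.norm_eq_abs, abs_of_pos (hgpos x hx.1)]
    exact hmono hx.1 hb hx.2
  have hIInt : ∀ b : ℝ, 0 < b → IntervalIntegrable g MeasureTheory.volume 0 b := fun b hb =>
    (intervalIntegrable_iff_integrableOn_Ioc_of_le hb.le).mpr (hInt b hb)
  set F : ℝ → ℝ := fun x => ∫ ρ in (0:ℝ)..x, g ρ with hF
  -- F continuous on [0, r]
  have hFc : ContinuousOn F (Set.Icc 0 r) := by
    have h0 : (0:ℝ) ∈ Set.uIcc (0:ℝ) r := Set.left_mem_uIcc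
    have := intervalIntegral.continuousOn_primitive_interval' (hIInt r hr) h0
    rwa [Set.uIcc_of_le hr.le] at this
  -- F has derivative g at positive points
  have hFd : ∀ x : ℝ, 0 < x → HasDerivAt F (g x) x := by
    intro x hx
    exact intervalIntegral.integral_hasDerivAt_right (hIInt x hx)
      (ContinuousOn.stronglyMeasurableAtFilter isOpen_Ioi hgc x hx)
      ((hgc x hx).continuousAt (Ioi_mem_nhds hx))
  set φ : ℝ → ℝ := fun t => (inner ℝ (𝒜 (t • ξ)) ξ : ℝ) - ν * F (t * r) with hφ
  have hφc : ContinuousOn φ (Set.Icc 0 1) := by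
    apply ContinuousOn.sub
    · exact (Continuous.inner (h𝒜c.comp (continuous_id.smul continuous_const))
        continuous_const).continuousOn
    · refine ContinuousOn.mul continuousOn_const (hFc.comp
        ((continuous_id.mul continuous_const).continuousOn) ?_)
      intro t ht
      exact ⟨mul_nonneg ht.1 hr.le, mul_le_of_le_one_left hr.le ht.2⟩
  have hφd : ∀ t ∈ Set.Ioo (0:ℝ) 1,
      HasDerivAt φ ((inner ℝ (DA (t • ξ) ξ) ξ : ℝ) - ν * (g (t * r) * r)) t := by
    intro t ht
    have htξ : t • ξ ≠ 0 := smul_ne_zero (ne_of_gt ht.1) hξ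
    have hsm : HasDerivAt (fun t : ℝ => t • ξ) ξ t := by
      simpa using (hasDerivAt_id t).smul_const ξ
    have hA : HasDerivAt (fun t : ℝ => 𝒜 (t • ξ)) (DA (t • ξ) ξ) t :=
      (hDA (t • ξ) htξ).comp_hasDerivAt t hsm
    have h1 : HasDerivAt (fun t : ℝ => (inner ℝ (𝒜 (t • ξ)) ξ : ℝ))
        (inner ℝ (DA (t • ξ) ξ) ξ : ℝ) t := by
      simpa using hA.inner ℝ (hasDerivAt_const t ξ)
    have h2 : HasDerivAt (fun t : ℝ => F (t * r)) (g (t * r) * r) t := by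
      have := (hFd (t * r) (mul_pos ht.1 hr)).comp t ((hasDerivAt_id t).mul_const r)
      simpa [Function.comp_def] using this
    exact h1.sub (h2.const_mul ν)
  have key : MonotoneOn φ (Set.Icc 0 1) := by
    refine monotoneOn_of_deriv_nonneg (convex_Icc 0 1) hφc ?_ ?_
    · intro x hx
      rw [interior_Icc] at hx
      exact (hφd x hx).differentiableAt.differentiableWithinAt
    · intro x hx
      rw [interior_Icc] at hx
      rw [(hφd x hx).deriv]
      have hxξ : x • ξ ≠ 0 := smul_ne_zero (ne_of_gt hx.1) hξ
      have hb := hell (x • ξ) hxξ ξ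
      have hnorm : ‖x • ξ‖ = x * r := by
        rw [norm_smul, Real.norm_eq_abs, abs_of_pos hx.1]
      rw [hnorm] at hb
      have hgp := hgpos (x * r) (mul_pos hx.1 hr)
      have h5 : g (x * r) * r ≤ g (x * r) / (x * r) * r ^ 2 := by
        rw [div_mul_eq_mul_div, le_div_iff₀ (mul_pos hx.1 hr)]
        nlinarith [mul_nonneg (mul_nonneg (mul_pos hgp hr).le hr.le) (sub_nonneg.mpr hx.2.le)]
      nlinarith [mul_le_mul_of_nonneg_left h5 hν.le, hb]
  have h01 := key (Set.left_mem_Icc.mpr zero_le_one) (Set.right_mem_Icc.mpr zero_le_one)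
    zero_le_one
  have hφ0 : φ 0 = 0 := by
    simp [hφ, hF, h𝒜0]
  have hφ1 : φ 1 = (inner ℝ (𝒜 ξ) ξ : ℝ) - ν * F r := by
    simp [hφ]
  rw [hφ0, hφ1] at h01
  simp only [hF] at h01
  linarith
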